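/- For the ZDT2 problem with d = 30 variables, a point x ∈ [0,1]^30 is Pareto optimal if and only if x_i = 0 for all i = 2, ..., 30, and the resulting Pareto front equals {(t, 1 − t^2) : t ∈ [0, 1]}. -/

import Mathlib

/-- `g(x) = 1 + (9/(30−1))·Σ_{i=2}^{30} x_i` for ZDT2 (0-indexed: sum over `i ≠ 0`). -/
noncomputable def zdt2G (x : Fin 30 → ℝ) : ℝ :=
  1 + (9 / 29) * ∑ i ∈ Finset.univ.erase (0 : Fin 30), x i

/-- `f2(x) = g(x)·(1 − (x_1/g(x))^2)` for ZDT2. -/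
noncomputable def zdt2F2 (x : Fin 30 → ℝ) : ℝ :=
  zdt2G x * (1 - (x 0 / zdt2G x) ^ 2)

lemma zdt2G_ge_one (x : Fin 30 → ℝ) (hx : ∀ i, x i ∈ Set.Icc (0 : ℝ) 1) :
    1 ≤ zdt2G x := by
  have h : 0 ≤ ∑ i ∈ Finset.univ.erase (0 : Fin 30), x i :=
    Finset.sum_nonneg fun i _ => (hx i).1
  unfold zdt2G; nlinarith

lemma zdt2F2_eq (x : Fin 30 → ℝ) (hg : zdt2G x ≠ 0) :
    zdt2F2 x = zdt2G x - (x 0) ^ 2 / zdt2G x := by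
  unfold zdt2F2; field_simp

lemma zdt2F2_ge (x : Fin 30 → ℝ) (hx : ∀ i, x i ∈ Set.Icc (0 : ℝ) 1) :
    1 - (x 0) ^ 2 ≤ zdt2F2 x := by
  have h1 := zdt2G_ge_one x hx
  rw [zdt2F2_eq x (by linarith)]
  have h2 := div_le_self (sq_nonneg (x 0)) h1
  linarith

lemma zdt2F2_gt (x : Fin 30 → ℝ) (hx : ∀ i, x i ∈ Set.Icc (0 : ℝ) 1)
    (hg : 1 < zdt2G x) : 1 - (x 0) ^ 2 < zdt2F2 x := by
  rw [zdt2F2_eq x (by linarith)]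
  have h2 := div_le_self (sq_nonneg (x 0)) (le_of_lt hg)
  linarith

lemma zdt2F2_of_zero (x : Fin 30 → ℝ) (hz : ∀ i : Fin 30, i ≠ 0 → x i = 0) :
    zdt2F2 x = 1 - (x 0) ^ 2 := by
  have hg : zdt2G x = 1 := by
    unfold zdt2G
    rw [Finset.sum_eq_zero fun i hi => hz i (Finset.ne_of_mem_erase hi)]
    ring
  unfold zdt2F2
  rw [hg]; ring

lemma zdt2G_gt_one (x : Fin 30 → ℝ) (hx : ∀ i, x i ∈ Set.Icc (0 : ℝ) 1)
    (i : Fin 30) (hi : i ≠ 0) (hpos : 0 < x i) : 1 < zdt2G x := by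
  have h : x i ≤ ∑ j ∈ Finset.univ.erase (0 : Fin 30), x j :=
    Finset.single_le_sum (fun j _ => (hx j).1)
      (Finset.mem_erase.mpr ⟨hi, Finset.mem_univ i⟩)
  unfold zdt2G; nlinarith

/-- For ZDT2 with `d = 30`, a point `x ∈ [0,1]^30` is Pareto optimal iff
`x_i = 0` for all `i = 2, ..., 30`, and the resulting Pareto front equals
`{(t, 1 − t^2) : t ∈ [0, 1]}`. -/
theorem zdt2_pareto_optimal_iff_and_front :
    (∀ x : Fin 30 → ℝ, (∀ i, x i ∈ Set.Icc (0 : ℝ) 1) →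
      ((¬ ∃ y : Fin 30 → ℝ, (∀ i, y i ∈ Set.Icc (0 : ℝ) 1) ∧
          y 0 ≤ x 0 ∧ zdt2F2 y ≤ zdt2F2 x ∧ (y 0 < x 0 ∨ zdt2F2 y < zdt2F2 x)) ↔
        ∀ i : Fin 30, i ≠ 0 → x i = 0)) ∧
    {p : ℝ × ℝ | ∃ x : Fin 30 → ℝ, (∀ i, x i ∈ Set.Icc (0 : ℝ) 1) ∧
        (∀ i : Fin 30, i ≠ 0 → x i = 0) ∧ p = (x 0, zdt2F2 x)} =
      {p : ℝ × ℝ | ∃ t ∈ Set.Icc (0 : ℝ) 1, p = (t, 1 - t ^ 2)} := by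
  constructor
  · intro x hx
    constructor
    · -- Pareto ⇒ all zero
      intro hnd i hi
      by_contra hne
      apply hnd
      have hxi : 0 < x i := lt_of_le_of_ne (hx i).1 (Ne.symm hne)
      set y : Fin 30 → ℝ := fun j => if j = 0 then x 0 else 0 with hy
      have hy0 : y 0 = x 0 := by simp [hy]
      have hyz : ∀ j : Fin 30, j ≠ 0 → y j = 0 := by
        intro j hj; simp [hy, hj]
      have hyIcc : ∀ j, y j ∈ Set.Icc (0 : ℝ) 1 := by
        intro j
        by_cases hj : j = 0
        · subst hj; rw [hy0]; exact hx 0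
        · rw [hyz j hj]; exact ⟨le_refl 0, zero_le_one⟩
      have hf2y : zdt2F2 y = 1 - (x 0) ^ 2 := by
        rw [zdt2F2_of_zero y hyz, hy0]
      have hgx : 1 < zdt2G x := zdt2G_gt_one x hx i hi hxi
      have hlt : zdt2F2 y < zdt2F2 x := by
        rw [hf2y]; exact zdt2F2_gt x hx hgx
      exact ⟨y, hyIcc, le_of_eq hy0, le_of_lt hlt, Or.inr hlt⟩
    · -- all zero ⇒ Pareto
      rintro hz ⟨y, hy, h1, h2, h3⟩
      have hfx : zdt2F2 x = 1 - (x 0) ^ 2 := zdt2F2_of_zero x hz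
      have hfy : 1 - (y 0) ^ 2 ≤ zdt2F2 y := zdt2F2_ge y hy
      have hy0 : 0 ≤ y 0 := (hy 0).1
      have hx0 : 0 ≤ x 0 := (hx 0).1
      have heq : y 0 = x 0 := by nlinarith
      rcases h3 with h3 | h3
      · exact absurd heq (ne_of_lt h3)
      · rw [hfx, ← heq] at h3; linarith
  · ext p
    simp only [Set.mem_setOf_eq]
    constructor
    · rintro ⟨x, hx, hz, rfl⟩
      exact ⟨x 0, hx 0, by rw [zdt2F2_of_zero x hz]⟩
    · rintro ⟨t, ht, rfl⟩
      refine ⟨fun j => if j = 0 then t else 0, ?_, ?_, ?_⟩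
      · intro j
        by_cases hj : j = 0
        · simpa [hj] using ht
        · simp [hj]
      · intro j hj; simp [hj]
      · have hz : ∀ j : Fin 30, j ≠ 0 → (fun j => if j = 0 then t else 0) j = 0 := by
          intro j hj; simp [hj]
        rw [zdt2F2_of_zero _ hz]; simp
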